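/- In the jump-diffusion model dS = S_-(γ n⁺ − γ n⁻ + δ dt) driven by two independent compensated Poisson processes n^± with intensity α = 1, with γ ∈ (0,1), δ = (2+ε)γ for some ε > 0: (i) the minimal signed martingale density Ẑ = E(−λ·M) takes negative values with positive probability; (ii) the measure Q with dQ/dP = E(βn⁺ + (β+2+ε)n⁻)_T for any β ∈ (−1, ∞) is an equivalent martingale measure for S with square-integrable density, so P^2_e(S) ≠ ∅. -/

import Mathlib

open MeasureTheory

variable {Ω : Type*} {m : MeasurableSpace Ω}

/-- `N` is a Poisson process with unit intensity, adapted to `F`, with increments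
independent of the past. -/
def IsUnitPoissonProcess (μ : Measure Ω) (F : Filtration ℝ m)
    (N : ℝ → Ω → ℕ) : Prop :=
  (∀ ω, N 0 ω = 0) ∧
  (∀ ω s t, 0 ≤ s → s ≤ t → N s ω ≤ N t ω) ∧
  (∀ t, Measurable[F t] (N t)) ∧
  (∀ s t, 0 ≤ s → s ≤ t →
    Measure.map (fun ω => N t ω - N s ω) μ =
      ProbabilityTheory.poissonMeasure (Real.toNNReal (t - s))) ∧
  (∀ s t, 0 ≤ s → s ≤ t →
    ProbabilityTheory.Indep
      (MeasurableSpace.comap (fun ω => N t ω - N s ω) inferInstance) (F s) μ)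

/-- The price process `S` of Example 5.3: the stochastic exponential of
`R = γ n⁺ - γ n⁻ + δ t`, explicitly
`S_t = S₀ e^{δt} (1+γ)^{N⁺_t} (1-γ)^{N⁻_t}`. -/
noncomputable def jumpStock (S0 γ δ : ℝ) (Np Nm : ℝ → Ω → ℕ)
    (t : ℝ) (ω : Ω) : ℝ :=
  S0 * Real.exp (δ * t) * (1 + γ) ^ Np t ω * (1 - γ) ^ Nm t ω

/-- The minimal signed martingale density `Ẑ = E(-λ·M)` of Example 5.3: since
`-λ·M = -(δ/(2γ)) N⁺ + (δ/(2γ)) N⁻` (the drifts cancel), its Doléans exponential is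
`Ẑ_t = (1 - δ/(2γ))^{N⁺_t} (1 + δ/(2γ))^{N⁻_t}`. -/
noncomputable def minimalDensity (γ δ : ℝ) (Np Nm : ℝ → Ω → ℕ)
    (t : ℝ) (ω : Ω) : ℝ :=
  (1 - δ / (2 * γ)) ^ Np t ω * (1 + δ / (2 * γ)) ^ Nm t ω

/-- The density process `Z = E(β n⁺ + (β+2+ε) n⁻)` of Example 5.3, explicitly
`Z_t = e^{-(2β+2+ε)t} (1+β)^{N⁺_t} (β+3+ε)^{N⁻_t}`. -/
noncomputable def esscherDensity (β ε : ℝ) (Np Nm : ℝ → Ω → ℕ)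
    (t : ℝ) (ω : Ω) : ℝ :=
  Real.exp (-(2 * β + 2 + ε) * t) * (1 + β) ^ Np t ω * (β + 3 + ε) ^ Nm t ω


open ProbabilityTheory
open scoped ENNReal NNReal

namespace JumpAux

lemma meas_pow (c : ℝ) : Measurable fun n : ℕ => c ^ n := measurable_from_top

lemma nat_pow_split (a c : ℝ) {p0 p1 p2 : ℕ} (h01 : p0 ≤ p1) (h12 : p1 ≤ p2) :
    a ^ p1 * c ^ p2 = (a * c) ^ p0 * ((a * c) ^ (p1 - p0) * c ^ (p2 - p1)) := by
  obtain ⟨q, rfl⟩ := Nat.exists_eq_add_of_le h01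
  obtain ⟨r, rfl⟩ := Nat.exists_eq_add_of_le h12
  simp only [Nat.add_sub_cancel_left, pow_add, mul_pow]
  ring

lemma poisson_mgf {Ω : Type*} {m : MeasurableSpace Ω} (μ : Measure Ω) (X : Ω → ℕ)
    (hX : Measurable X) (r : ℝ≥0)
    (hlaw : Measure.map X μ = poissonMeasure r) {c : ℝ} (hc : 0 ≤ c) :
    ∫⁻ ω, ENNReal.ofReal (c ^ X ω) ∂μ = ENNReal.ofReal (Real.exp (r * (c - 1))) := by
  have hmeas : Measurable fun n : ℕ => ENNReal.ofReal (c ^ n) :=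
    ENNReal.measurable_ofReal.comp (meas_pow c)
  rw [← lintegral_map hmeas hX, hlaw, lintegral_countable']
  have hpmf : ∀ n : ℕ, poissonMeasure r {n} = ENNReal.ofReal (poissonPMFReal r n) := by
    intro n
    rw [poissonMeasure_singleton]
    rfl
  have hsum : Summable fun n : ℕ => c ^ n * poissonPMFReal r n := by
    have h := (NormedSpace.expSeries_div_hasSum_exp ((r : ℝ) * c)).summable
    have heq : (fun n : ℕ => c ^ n * poissonPMFReal r n)
        = fun n : ℕ => Real.exp (-(r : ℝ)) * (((r : ℝ) * c) ^ n / n.factorial) := by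
      funext n
      simp only [poissonPMFReal, mul_pow]
      ring
    rw [heq]
    exact h.mul_left _
  calc ∑' n : ℕ, ENNReal.ofReal (c ^ n) * poissonMeasure r {n}
      = ∑' n : ℕ, ENNReal.ofReal (c ^ n * poissonPMFReal r n) := by
        refine tsum_congr fun n => ?_
        rw [hpmf n, ← ENNReal.ofReal_mul (pow_nonneg hc n)]
    _ = ENNReal.ofReal (∑' n : ℕ, c ^ n * poissonPMFReal r n) :=
        (ENNReal.ofReal_tsum_of_nonneg
          (fun n => mul_nonneg (pow_nonneg hc n) poissonPMFReal_nonneg) hsum).symm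
    _ = ENNReal.ofReal (Real.exp (r * (c - 1))) := by
        congr 1
        have h2 : HasSum (fun n : ℕ => c ^ n * poissonPMFReal r n)
            (Real.exp (-(r : ℝ)) * Real.exp ((r : ℝ) * c)) := by
          have h := NormedSpace.expSeries_div_hasSum_exp ((r : ℝ) * c)
          rw [← Real.exp_eq_exp_ℝ] at h
          have h' := h.mul_left (Real.exp (-(r : ℝ)))
          convert h' using 2 with n
          · rfl
          simp only [poissonPMFReal, mul_pow]
          ring
        rw [h2.tsum_eq, ← Real.exp_add]
        congr 1
        ring

lemma indep_mgf {Ω : Type*} {m : MeasurableSpace Ω} (μ : Measure Ω) (X Y : Ω → ℕ)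
    (hX : Measurable X) (hY : Measurable Y) (r : ℝ≥0)
    (hlawX : Measure.map X μ = poissonMeasure r)
    (hlawY : Measure.map Y μ = poissonMeasure r)
    (hind : IndepFun X Y μ) {c d : ℝ} (hc : 0 ≤ c) (hd : 0 ≤ d) :
    ∫⁻ ω, ENNReal.ofReal (c ^ X ω * d ^ Y ω) ∂μ
      = ENNReal.ofReal (Real.exp (r * (c - 1)) * Real.exp (r * (d - 1))) := by
  have h1 : (fun ω => ENNReal.ofReal (c ^ X ω * d ^ Y ω))
      = fun ω => ENNReal.ofReal (c ^ X ω) * ENNReal.ofReal (d ^ Y ω) := by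
    funext ω; rw [ENNReal.ofReal_mul (pow_nonneg hc _)]
  have hmc : Measurable fun ω => ENNReal.ofReal (c ^ X ω) :=
    (ENNReal.measurable_ofReal.comp (meas_pow c)).comp hX
  have hmd : Measurable fun ω => ENNReal.ofReal (d ^ Y ω) :=
    (ENNReal.measurable_ofReal.comp (meas_pow d)).comp hY
  have hind2 : IndepFun (fun ω => ENNReal.ofReal (c ^ X ω))
      (fun ω => ENNReal.ofReal (d ^ Y ω)) μ :=
    hind.comp (ENNReal.measurable_ofReal.comp (meas_pow c))
      (ENNReal.measurable_ofReal.comp (meas_pow d))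
  rw [h1,
    lintegral_mul_eq_lintegral_mul_lintegral_of_indepFun'' hmc.aemeasurable hmd.aemeasurable hind2,
    poisson_mgf μ X hX r hlawX hc, poisson_mgf μ Y hY r hlawY hd,
    ← ENNReal.ofReal_mul (Real.exp_nonneg _)]

end JumpAux

namespace JumpAux

lemma key (μ : Measure Ω) [IsProbabilityMeasure μ]
    (F : Filtration ℝ m) (T : ℝ)
    (Np Nm : ℝ → Ω → ℕ)
    (hNp : IsUnitPoissonProcess μ F Np)
    (hNm : IsUnitPoissonProcess μ F Nm)
    (hindep : ∀ s t, 0 ≤ s → s ≤ t →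
      ProbabilityTheory.IndepFun
        (fun ω => Np t ω - Np s ω) (fun ω => Nm t ω - Nm s ω) μ)
    (hindep' : ∀ s t, 0 ≤ s → s ≤ t →
      ProbabilityTheory.Indep
        (MeasurableSpace.comap
          (fun ω => (Np t ω - Np s ω, Nm t ω - Nm s ω)) inferInstance) (F s) μ)
    (S0 γ δ ε β : ℝ)
    (hS0 : 0 < S0) (hγ0 : 0 < γ) (hγ1 : γ < 1) (hε : 0 < ε) (hβ : -1 < β)
    (hδ : δ = (2 + ε) * γ)
    (s t : ℝ) (hs : 0 ≤ s) (hst : s ≤ t) (htT : t ≤ T)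
    (A : Set Ω) (hA : MeasurableSet[F s] A) :
    ∫⁻ ω in A, ENNReal.ofReal
        (jumpStock S0 γ δ Np Nm t ω * esscherDensity β ε Np Nm T ω) ∂μ
      = ENNReal.ofReal (S0 * Real.exp ((δ - (2 * β + 2 + ε)) * s)) *
        ∫⁻ ω in A, ENNReal.ofReal
          (((1 + γ) * (1 + β)) ^ Np s ω * ((1 - γ) * (β + 3 + ε)) ^ Nm s ω) ∂μ := by
  subst hδ
  have ht0 : 0 ≤ t := hs.trans hst
  have hT0 : 0 ≤ T := ht0.trans htT
  have ha : (0:ℝ) < 1 + γ := by linarith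
  have hb : (0:ℝ) < 1 - γ := by linarith
  have hc : (0:ℝ) < 1 + β := by linarith
  have hd : (0:ℝ) < β + 3 + ε := by linarith
  have mNp : ∀ u, Measurable (Np u) := fun u => (hNp.2.2.1 u).mono (F.le u) le_rfl
  have mNm : ∀ u, Measurable (Nm u) := fun u => (hNm.2.2.1 u).mono (F.le u) le_rfl
  -- the three pieces
  set f1 : Ω → ℝ≥0∞ := fun ω =>
    ENNReal.ofReal (((1 + γ) * (1 + β)) ^ Np s ω * ((1 - γ) * (β + 3 + ε)) ^ Nm s ω) with hf1def
  set f2 : Ω → ℝ≥0∞ := fun ω =>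
    ENNReal.ofReal (((1 + γ) * (1 + β)) ^ (Np t ω - Np s ω) *
      ((1 - γ) * (β + 3 + ε)) ^ (Nm t ω - Nm s ω)) with hf2def
  set f3 : Ω → ℝ≥0∞ := fun ω =>
    ENNReal.ofReal ((1 + β) ^ (Np T ω - Np t ω) * (β + 3 + ε) ^ (Nm T ω - Nm t ω)) with hf3def
  have hK : (0:ℝ) < S0 * Real.exp ((2 + ε) * γ * t) * Real.exp (-(2 * β + 2 + ε) * T) :=
    by positivity
  -- pointwise identity
  have hpoint : ∀ ω, A.indicator (fun ω => ENNReal.ofReal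
        (jumpStock S0 (γ) ((2 + ε) * γ) Np Nm t ω * esscherDensity β ε Np Nm T ω)) ω
      = ENNReal.ofReal (S0 * Real.exp ((2 + ε) * γ * t) * Real.exp (-(2 * β + 2 + ε) * T)) *
        (f3 ω * (f2 ω * A.indicator f1 ω)) := by
    intro ω
    by_cases hω : ω ∈ A
    · simp only [Set.indicator_of_mem hω]
      rw [← ENNReal.ofReal_mul (by positivity : (0:ℝ) ≤ ((1 + γ) * (1 + β)) ^ (Np t ω - Np s ω) *
            ((1 - γ) * (β + 3 + ε)) ^ (Nm t ω - Nm s ω)),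
          ← ENNReal.ofReal_mul (by positivity : (0:ℝ) ≤ (1 + β) ^ (Np T ω - Np t ω) *
            (β + 3 + ε) ^ (Nm T ω - Nm t ω)),
          ← ENNReal.ofReal_mul hK.le]
      congr 1
      have hsplit1 := nat_pow_split (1 + γ) (1 + β)
        (hNp.2.1 ω s t hs hst) (hNp.2.1 ω t T ht0 htT)
      have hsplit2 := nat_pow_split (1 - γ) (β + 3 + ε)
        (hNm.2.1 ω s t hs hst) (hNm.2.1 ω t T ht0 htT)
      calc jumpStock S0 γ ((2 + ε) * γ) Np Nm t ω * esscherDensity β ε Np Nm T ω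
          = (S0 * Real.exp ((2 + ε) * γ * t) * Real.exp (-(2 * β + 2 + ε) * T)) *
            (((1 + γ) ^ Np t ω * (1 + β) ^ Np T ω) *
             ((1 - γ) ^ Nm t ω * (β + 3 + ε) ^ Nm T ω)) := by
            simp only [jumpStock, esscherDensity]; ring
        _ = _ := by rw [hsplit1, hsplit2]; ring
    · simp [Set.indicator_of_notMem hω]
  -- measurability facts
  have hφc : Measurable fun p : ℕ × ℕ =>
      ENNReal.ofReal ((1 + β) ^ p.1 * (β + 3 + ε) ^ p.2) :=
    ENNReal.measurable_ofReal.comp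
      (((meas_pow _).comp measurable_fst).mul ((meas_pow _).comp measurable_snd))
  have hφac : Measurable fun p : ℕ × ℕ =>
      ENNReal.ofReal (((1 + γ) * (1 + β)) ^ p.1 * ((1 - γ) * (β + 3 + ε)) ^ p.2) :=
    ENNReal.measurable_ofReal.comp
      (((meas_pow _).comp measurable_fst).mul ((meas_pow _).comp measurable_snd))
  have hpairTT : Measurable fun ω => (Np T ω - Np t ω, Nm T ω - Nm t ω) :=
    ((mNp T).sub (mNp t)).prodMk ((mNm T).sub (mNm t))
  have hpairST : Measurable fun ω => (Np t ω - Np s ω, Nm t ω - Nm s ω) :=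
    ((mNp t).sub (mNp s)).prodMk ((mNm t).sub (mNm s))
  have hf3comap : Measurable[MeasurableSpace.comap
      (fun ω => (Np T ω - Np t ω, Nm T ω - Nm t ω)) inferInstance] f3 :=
    hφc.comp (comap_measurable _)
  have hf2comap : Measurable[MeasurableSpace.comap
      (fun ω => (Np t ω - Np s ω, Nm t ω - Nm s ω)) inferInstance] f2 :=
    hφac.comp (comap_measurable _)
  have hf1Fs : Measurable[F s] f1 :=
    ENNReal.measurable_ofReal.comp
      (((meas_pow _).comp (hNp.2.2.1 s)).mul ((meas_pow _).comp (hNm.2.2.1 s)))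
  have hf2Ft : Measurable[F t] f2 :=
    ENNReal.measurable_ofReal.comp
      (((meas_pow _).comp ((hNp.2.2.1 t).sub ((hNp.2.2.1 s).mono (F.mono hst) le_rfl))).mul
       ((meas_pow _).comp ((hNm.2.2.1 t).sub ((hNm.2.2.1 s).mono (F.mono hst) le_rfl))))
  have hAt : MeasurableSet[F t] A := F.mono hst A hA
  have hgFt : Measurable[F t] fun ω => f2 ω * A.indicator f1 ω :=
    hf2Ft.mul ((hf1Fs.mono (F.mono hst) le_rfl).indicator hAt)
  have hindFs : Measurable[F s] fun ω => A.indicator f1 ω := hf1Fs.indicator hA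
  -- the three expectations
  have E3 : ∫⁻ ω, f3 ω ∂μ
      = ENNReal.ofReal (Real.exp ((T - t) * ((1 + β) - 1)) *
          Real.exp ((T - t) * ((β + 3 + ε) - 1))) := by
    rw [hf3def]
    rw [indep_mgf μ (fun ω => Np T ω - Np t ω) (fun ω => Nm T ω - Nm t ω) ((mNp T).sub (mNp t)) ((mNm T).sub (mNm t)) (Real.toNNReal (T - t))
      (hNp.2.2.2.1 t T ht0 htT) (hNm.2.2.2.1 t T ht0 htT) (hindep t T ht0 htT) hc.le hd.le,
      Real.coe_toNNReal _ (by linarith)]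
  have E2 : ∫⁻ ω, f2 ω ∂μ
      = ENNReal.ofReal (Real.exp ((t - s) * ((1 + γ) * (1 + β) - 1)) *
          Real.exp ((t - s) * ((1 - γ) * (β + 3 + ε) - 1))) := by
    rw [hf2def]
    rw [indep_mgf μ (fun ω => Np t ω - Np s ω) (fun ω => Nm t ω - Nm s ω) ((mNp t).sub (mNp s)) ((mNm t).sub (mNm s)) (Real.toNNReal (t - s))
      (hNp.2.2.2.1 s t hs hst) (hNm.2.2.2.1 s t hs hst) (hindep s t hs hst)
      (by positivity) (by positivity),
      Real.coe_toNNReal _ (by linarith)]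
  -- main computation
  calc ∫⁻ ω in A, ENNReal.ofReal
        (jumpStock S0 γ ((2 + ε) * γ) Np Nm t ω * esscherDensity β ε Np Nm T ω) ∂μ
      = ∫⁻ ω, A.indicator (fun ω => ENNReal.ofReal
          (jumpStock S0 γ ((2 + ε) * γ) Np Nm t ω * esscherDensity β ε Np Nm T ω)) ω ∂μ :=
        (lintegral_indicator (F.le s A hA) _).symm
    _ = ∫⁻ ω, ENNReal.ofReal (S0 * Real.exp ((2 + ε) * γ * t) *
          Real.exp (-(2 * β + 2 + ε) * T)) * (f3 ω * (f2 ω * A.indicator f1 ω)) ∂μ :=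
        lintegral_congr hpoint
    _ = ENNReal.ofReal (S0 * Real.exp ((2 + ε) * γ * t) * Real.exp (-(2 * β + 2 + ε) * T)) *
        ∫⁻ ω, f3 ω * (f2 ω * A.indicator f1 ω) ∂μ := by
        rw [lintegral_const_mul]
        exact (hf3comap.mono hpairTT.comap_le le_rfl).mul
          (hgFt.mono (F.le t) le_rfl)
    _ = ENNReal.ofReal (S0 * Real.exp ((2 + ε) * γ * t) * Real.exp (-(2 * β + 2 + ε) * T)) *
        ((∫⁻ ω, f3 ω ∂μ) * ∫⁻ ω, f2 ω * A.indicator f1 ω ∂μ) := by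
        rw [lintegral_mul_eq_lintegral_mul_lintegral_of_independent_measurableSpace
          hpairTT.comap_le (F.le t) (hindep' t T ht0 htT) hf3comap hgFt]
    _ = ENNReal.ofReal (S0 * Real.exp ((2 + ε) * γ * t) * Real.exp (-(2 * β + 2 + ε) * T)) *
        ((∫⁻ ω, f3 ω ∂μ) * ((∫⁻ ω, f2 ω ∂μ) * ∫⁻ ω, A.indicator f1 ω ∂μ)) := by
        rw [lintegral_mul_eq_lintegral_mul_lintegral_of_independent_measurableSpace
          hpairST.comap_le (F.le s) (hindep' s t hs hst) hf2comap hindFs]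
    _ = ENNReal.ofReal (S0 * Real.exp (((2 + ε) * γ - (2 * β + 2 + ε)) * s)) *
        ∫⁻ ω in A, f1 ω ∂μ := by
        rw [E3, E2, lintegral_indicator (F.le s A hA) _]
        rw [show ∀ X Y Z I : ℝ≥0∞, X * (Y * (Z * I)) = (X * Y * Z) * I from
          fun X Y Z I => by ring]
        congr 1
        rw [← ENNReal.ofReal_mul hK.le, ← ENNReal.ofReal_mul (by positivity)]
        congr 1
        rw [show ∀ x1 x2 x3 x4 x5 x6 : ℝ, S0 * Real.exp x1 * Real.exp x2 *
            (Real.exp x3 * Real.exp x4) * (Real.exp x5 * Real.exp x6)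
            = S0 * Real.exp (x1 + x2 + x3 + x4 + x5 + x6) from fun x1 x2 x3 x4 x5 x6 => by
          rw [Real.exp_add, Real.exp_add, Real.exp_add, Real.exp_add, Real.exp_add]; ring]
        congr 1
        ring

end JumpAux

/-- Example 5.3.  `N⁺, N⁻` are independent unit-intensity Poisson
processes, `S` is the jump model `dS = S₋(γ dn⁺ - γ dn⁻ + δ dt)` with `γ ∈ (0,1)`,
`δ = (2+ε)γ`, `ε > 0`.  Then: (i) the minimal signed martingale density
`Ẑ = E(-λ·M)` takes negative values with positive probability; (ii) for any
`β > -1`, the measure `dQ = E(β n⁺ + (β+2+ε) n⁻)_T dP` is a probability measure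
equivalent to `P` with square-integrable density under which `S` is a martingale
on `[0,T]`; in particular `P²_e(S) ≠ ∅`. -/
theorem jump_example_VOMM_fails_but_P2e_nonempty
    (μ : Measure Ω) [IsProbabilityMeasure μ]
    (F : Filtration ℝ m) (T : ℝ) (hT : 0 < T)
    (Np Nm : ℝ → Ω → ℕ)
    (hNp : IsUnitPoissonProcess μ F Np)
    (hNm : IsUnitPoissonProcess μ F Nm)
    -- independence of the two Poisson processes (of their joint increments)
    (hindep : ∀ s t, 0 ≤ s → s ≤ t →
      ProbabilityTheory.IndepFun
        (fun ω => Np t ω - Np s ω) (fun ω => Nm t ω - Nm s ω) μ)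
    (hindep' : ∀ s t, 0 ≤ s → s ≤ t →
      ProbabilityTheory.Indep
        (MeasurableSpace.comap
          (fun ω => (Np t ω - Np s ω, Nm t ω - Nm s ω)) inferInstance) (F s) μ)
    (S0 γ δ ε β : ℝ)
    (hS0 : 0 < S0) (hγ0 : 0 < γ) (hγ1 : γ < 1) (hε : 0 < ε) (hβ : -1 < β)
    (hδ : δ = (2 + ε) * γ) :
    -- (i) the minimal signed martingale density takes negative values
    0 < μ {ω | ∃ t ∈ Set.Icc (0 : ℝ) T, minimalDensity γ δ Np Nm t ω < 0} ∧
    -- (ii) an explicit element of P²_e(S)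
    (let ν : Measure Ω :=
      μ.withDensity (fun ω => ENNReal.ofReal (esscherDensity β ε Np Nm T ω))
    IsProbabilityMeasure ν ∧
      ν ≪ μ ∧ μ ≪ ν ∧
      MemLp (fun ω => esscherDensity β ε Np Nm T ω) 2 μ ∧
      ∀ s t, 0 ≤ s → s ≤ t → t ≤ T →
        ν[jumpStock S0 γ δ Np Nm t | F s] =ᵐ[ν] jumpStock S0 γ δ Np Nm s) := by
  have hT0 : (0:ℝ) ≤ T := hT.le
  have ha : (0:ℝ) < 1 + γ := by linarith
  have hb : (0:ℝ) < 1 - γ := by linarith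
  have hc : (0:ℝ) < 1 + β := by linarith
  have hd : (0:ℝ) < β + 3 + ε := by linarith
  have mNp : ∀ u, Measurable (Np u) := fun u => (hNp.2.2.1 u).mono (F.le u) le_rfl
  have mNm : ∀ u, Measurable (Nm u) := fun u => (hNm.2.2.1 u).mono (F.le u) le_rfl
  have lawNp : ∀ u, 0 ≤ u → Measure.map (Np u) μ
      = ProbabilityTheory.poissonMeasure (Real.toNNReal u) := by
    intro u hu
    have h := hNp.2.2.2.1 0 u le_rfl hu
    simpa only [hNp.1, Nat.sub_zero, sub_zero] using h
  have lawNm : ∀ u, 0 ≤ u → Measure.map (Nm u) μ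
      = ProbabilityTheory.poissonMeasure (Real.toNNReal u) := by
    intro u hu
    have h := hNm.2.2.2.1 0 u le_rfl hu
    simpa only [hNm.1, Nat.sub_zero, sub_zero] using h
  have indepUV : ∀ u, 0 ≤ u → ProbabilityTheory.IndepFun (Np u) (Nm u) μ := by
    intro u hu
    have h := hindep 0 u le_rfl hu
    simpa only [hNp.1, hNm.1, Nat.sub_zero] using h
  constructor
  · -- part (i)
    have hsub : (Np T) ⁻¹' {1} ⊆
        {ω | ∃ t ∈ Set.Icc (0:ℝ) T, minimalDensity γ δ Np Nm t ω < 0} := by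
      intro ω hω
      have h1 : Np T ω = 1 := hω
      refine ⟨T, ⟨hT0, le_rfl⟩, ?_⟩
      have hq : δ / (2 * γ) = (2 + ε) / 2 := by
        rw [hδ]; field_simp
      have hneg : 1 - δ / (2 * γ) < 0 := by rw [hq]; linarith
      have hpos : (0:ℝ) < (1 + δ / (2 * γ)) ^ Nm T ω := by
        refine pow_pos ?_ _
        rw [hq]; linarith
      have heq : minimalDensity γ δ Np Nm T ω
          = (1 - δ / (2 * γ)) * (1 + δ / (2 * γ)) ^ Nm T ω := by
        simp only [minimalDensity, h1, pow_one]
      rw [heq]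
      exact mul_neg_of_neg_of_pos hneg hpos
    refine lt_of_lt_of_le ?_ (measure_mono hsub)
    have hμE : μ ((Np T) ⁻¹' {1})
        = ProbabilityTheory.poissonMeasure (Real.toNNReal T) {1} := by
      rw [← lawNp T hT0, Measure.map_apply (mNp T) (measurableSet_singleton 1)]
    rw [hμE, ProbabilityTheory.poissonMeasure_singleton]
    have hrfl : ENNReal.ofReal (Real.exp (-((Real.toNNReal T : ℝ))) * (Real.toNNReal T : ℝ) ^ 1 /
          (Nat.factorial 1 : ℝ))
        = ENNReal.ofReal (ProbabilityTheory.poissonPMFReal (Real.toNNReal T) 1) := rfl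
    rw [hrfl]
    exact ENNReal.ofReal_pos.mpr
      (ProbabilityTheory.poissonPMFReal_pos (Real.toNNReal_pos.mpr hT))
  · -- part (ii)
    have hZeq : esscherDensity β ε Np Nm T = fun ω =>
        Real.exp (-(2 * β + 2 + ε) * T) * (1 + β) ^ Np T ω * (β + 3 + ε) ^ Nm T ω := rfl
    have hZmeas : Measurable (esscherDensity β ε Np Nm T) := by
      rw [hZeq]
      exact (measurable_const.mul ((JumpAux.meas_pow _).comp (mNp T))).mul
        ((JumpAux.meas_pow _).comp (mNm T))
    have hZpos : ∀ ω, 0 < esscherDensity β ε Np Nm T ω := fun ω =>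
      mul_pos (mul_pos (Real.exp_pos _) (pow_pos hc _)) (pow_pos hd _)
    set w : Ω → ℝ≥0∞ := fun ω => ENNReal.ofReal (esscherDensity β ε Np Nm T ω) with hwdef
    have hw : Measurable w := ENNReal.measurable_ofReal.comp hZmeas
    have hf1fin : ∀ u, 0 ≤ u →
        ∫⁻ ω, ENNReal.ofReal
          (((1 + γ) * (1 + β)) ^ Np u ω * ((1 - γ) * (β + 3 + ε)) ^ Nm u ω) ∂μ
        = ENNReal.ofReal (Real.exp (u * ((1 + γ) * (1 + β) - 1)) *
            Real.exp (u * ((1 - γ) * (β + 3 + ε) - 1))) := by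
      intro u hu
      rw [JumpAux.indep_mgf μ (Np u) (Nm u) (mNp u) (mNm u) (Real.toNNReal u)
        (lawNp u hu) (lawNm u hu) (indepUV u hu) (by positivity) (by positivity),
        Real.coe_toNNReal u hu]
    have lint_Z : ∫⁻ ω, w ω ∂μ = 1 := by
      have hpt : ∀ ω, w ω = ENNReal.ofReal (Real.exp (-(2 * β + 2 + ε) * T)) *
          ENNReal.ofReal ((1 + β) ^ Np T ω * (β + 3 + ε) ^ Nm T ω) := by
        intro ω
        rw [← ENNReal.ofReal_mul (Real.exp_nonneg _)]
        show ENNReal.ofReal (esscherDensity β ε Np Nm T ω) = _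
        congr 1
        show Real.exp (-(2 * β + 2 + ε) * T) * (1 + β) ^ Np T ω * (β + 3 + ε) ^ Nm T ω = _
        ring
      have hmeasg : Measurable fun ω =>
          ENNReal.ofReal ((1 + β) ^ Np T ω * (β + 3 + ε) ^ Nm T ω) :=
        ENNReal.measurable_ofReal.comp
          (((JumpAux.meas_pow (1 + β)).comp (mNp T)).mul
            ((JumpAux.meas_pow (β + 3 + ε)).comp (mNm T)))
      rw [lintegral_congr hpt, lintegral_const_mul _ hmeasg,
        JumpAux.indep_mgf μ (Np T) (Nm T) (mNp T) (mNm T) (Real.toNNReal T)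
          (lawNp T hT0) (lawNm T hT0) (indepUV T hT0) hc.le hd.le,
        Real.coe_toNNReal T hT0,
        ← ENNReal.ofReal_mul (Real.exp_nonneg _),
        ← Real.exp_add, ← Real.exp_add,
        show -(2 * β + 2 + ε) * T + (T * (1 + β - 1) + T * (β + 3 + ε - 1)) = 0 by ring,
        Real.exp_zero, ENNReal.ofReal_one]
    have hνprob : IsProbabilityMeasure (μ.withDensity w) :=
      ⟨by rw [withDensity_apply w MeasurableSet.univ, Measure.restrict_univ, lint_Z]⟩
    have hμν : μ ≪ μ.withDensity w := by
      refine Measure.AbsolutelyContinuous.mk fun s hs hνs => ?_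
      rw [withDensity_apply_eq_zero hw] at hνs
      have huniv : {x | w x ≠ 0} = Set.univ :=
        Set.eq_univ_of_forall fun x => (ENNReal.ofReal_pos.mpr (hZpos x)).ne'
      rwa [huniv, Set.univ_inter] at hνs
    have hsq_pt : ∀ ω, ENNReal.ofReal (esscherDensity β ε Np Nm T ω ^ 2)
        = ENNReal.ofReal (Real.exp (-(2 * β + 2 + ε) * T) ^ 2) *
          ENNReal.ofReal (((1 + β) ^ 2) ^ Np T ω * ((β + 3 + ε) ^ 2) ^ Nm T ω) := by
      intro ω
      rw [← ENNReal.ofReal_mul (by positivity)]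
      congr 1
      show (Real.exp (-(2 * β + 2 + ε) * T) * (1 + β) ^ Np T ω *
        (β + 3 + ε) ^ Nm T ω) ^ 2 = _
      rw [show ∀ x y z : ℝ, (x * y * z) ^ 2 = x ^ 2 * (y ^ 2 * z ^ 2) from
        fun x y z => by ring, pow_right_comm (1 + β), pow_right_comm (β + 3 + ε)]
    have hsq_fin : ∫⁻ ω, ENNReal.ofReal (esscherDensity β ε Np Nm T ω ^ 2) ∂μ < ⊤ := by
      have hmeasg : Measurable fun ω =>
          ENNReal.ofReal (((1 + β) ^ 2) ^ Np T ω * ((β + 3 + ε) ^ 2) ^ Nm T ω) :=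
        ENNReal.measurable_ofReal.comp
          (((JumpAux.meas_pow ((1 + β) ^ 2)).comp (mNp T)).mul
            ((JumpAux.meas_pow ((β + 3 + ε) ^ 2)).comp (mNm T)))
      rw [lintegral_congr hsq_pt, lintegral_const_mul _ hmeasg,
        JumpAux.indep_mgf μ (Np T) (Nm T) (mNp T) (mNm T) (Real.toNNReal T)
          (lawNp T hT0) (lawNm T hT0) (indepUV T hT0) (by positivity) (by positivity)]
      exact ENNReal.mul_lt_top ENNReal.ofReal_lt_top ENNReal.ofReal_lt_top
    have hmem : MemLp (fun ω => esscherDensity β ε Np Nm T ω) 2 μ := by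
      rw [memLp_two_iff_integrable_sq hZmeas.aestronglyMeasurable]
      exact ⟨(hZmeas.pow_const 2).aestronglyMeasurable,
        (hasFiniteIntegral_iff_ofReal (ae_of_all _ fun ω => sq_nonneg _)).mpr hsq_fin⟩
    have hSmeas : ∀ u, Measurable (jumpStock S0 γ δ Np Nm u) := by
      intro u
      have heq : jumpStock S0 γ δ Np Nm u = fun ω =>
          S0 * Real.exp (δ * u) * (1 + γ) ^ Np u ω * (1 - γ) ^ Nm u ω := rfl
      rw [heq]
      exact (measurable_const.mul ((JumpAux.meas_pow _).comp (mNp u))).mul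
        ((JumpAux.meas_pow _).comp (mNm u))
    have hSpos : ∀ u ω, 0 < jumpStock S0 γ δ Np Nm u ω := fun u ω =>
      mul_pos (mul_pos (mul_pos hS0 (Real.exp_pos _)) (pow_pos ha _)) (pow_pos hb _)
    have hkey := fun (s t : ℝ) (hs : 0 ≤ s) (hst : s ≤ t) (htT : t ≤ T) (A : Set Ω)
        (hA : MeasurableSet[F s] A) =>
      JumpAux.key μ F T Np Nm hNp hNm hindep hindep' S0 γ δ ε β hS0 hγ0 hγ1 hε hβ hδ
        s t hs hst htT A hA
    have hSZfin : ∀ t, 0 ≤ t → t ≤ T →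
        ∫⁻ ω, ENNReal.ofReal
          (jumpStock S0 γ δ Np Nm t ω * esscherDensity β ε Np Nm T ω) ∂μ < ⊤ := by
      intro t ht0 htT
      have h := hkey t t ht0 le_rfl htT Set.univ MeasurableSet.univ
      rw [Measure.restrict_univ] at h
      rw [h, hf1fin t ht0]
      exact ENNReal.mul_lt_top ENNReal.ofReal_lt_top ENNReal.ofReal_lt_top
    have hIntν : ∀ t, 0 ≤ t → t ≤ T →
        Integrable (jumpStock S0 γ δ Np Nm t) (μ.withDensity w) := by
      intro t ht0 htT
      refine ⟨(hSmeas t).aestronglyMeasurable, ?_⟩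
      have hmeasS : Measurable fun ω => ENNReal.ofReal (jumpStock S0 γ δ Np Nm t ω) :=
        ENNReal.measurable_ofReal.comp (hSmeas t)
      rw [hasFiniteIntegral_iff_ofReal (ae_of_all _ fun ω => (hSpos t ω).le),
        lintegral_withDensity_eq_lintegral_mul μ hw hmeasS]
      have hpt : (fun ω => (w * fun ω => ENNReal.ofReal (jumpStock S0 γ δ Np Nm t ω)) ω)
          = fun ω => ENNReal.ofReal
            (jumpStock S0 γ δ Np Nm t ω * esscherDensity β ε Np Nm T ω) := by
        funext ω
        show ENNReal.ofReal (esscherDensity β ε Np Nm T ω) *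
          ENNReal.ofReal (jumpStock S0 γ δ Np Nm t ω) = _
        rw [← ENNReal.ofReal_mul (hZpos ω).le]
        exact congrArg _ (mul_comm _ _)
      rw [hpt]
      exact hSZfin t ht0 htT
    have hconv : ∀ u, 0 ≤ u → ∀ A : Set Ω, MeasurableSet A →
        ∫ ω in A, jumpStock S0 γ δ Np Nm u ω ∂(μ.withDensity w)
          = (∫⁻ ω in A, ENNReal.ofReal
              (jumpStock S0 γ δ Np Nm u ω * esscherDensity β ε Np Nm T ω) ∂μ).toReal := by
      intro u hu A hAm
      rw [integral_eq_lintegral_of_nonneg_ae (ae_of_all _ fun ω => (hSpos u ω).le)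
        (hSmeas u).aestronglyMeasurable]
      congr 1
      have hmeasS : Measurable fun ω => ENNReal.ofReal (jumpStock S0 γ δ Np Nm u ω) :=
        ENNReal.measurable_ofReal.comp (hSmeas u)
      rw [restrict_withDensity hAm,
        lintegral_withDensity_eq_lintegral_mul _ hw hmeasS]
      refine lintegral_congr fun ω => ?_
      show ENNReal.ofReal (esscherDensity β ε Np Nm T ω) *
        ENNReal.ofReal (jumpStock S0 γ δ Np Nm u ω) = _
      rw [← ENNReal.ofReal_mul (hZpos ω).le]
      exact congrArg _ (mul_comm _ _)
    have hmart : ∀ s t, 0 ≤ s → s ≤ t → t ≤ T →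
        (μ.withDensity w)[jumpStock S0 γ δ Np Nm t | F s]
          =ᵐ[μ.withDensity w] jumpStock S0 γ δ Np Nm s := by
      intro s t hs hst htT
      haveI := hνprob
      haveI : SigmaFinite ((μ.withDensity w).trim (F.le s)) := inferInstance
      have hgsm : StronglyMeasurable[F s] (jumpStock S0 γ δ Np Nm s) := by
        have heq : jumpStock S0 γ δ Np Nm s = fun ω =>
            S0 * Real.exp (δ * s) * (1 + γ) ^ Np s ω * (1 - γ) ^ Nm s ω := rfl
        rw [heq]
        exact Measurable.stronglyMeasurable
          ((measurable_const.mul ((JumpAux.meas_pow _).comp (hNp.2.2.1 s))).mul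
            ((JumpAux.meas_pow _).comp (hNm.2.2.1 s)))
      refine (ae_eq_condExp_of_forall_setIntegral_eq (F.le s)
        (hIntν t (hs.trans hst) htT)
        (fun A hA hfin => (hIntν s hs (hst.trans htT)).integrableOn)
        (fun A hA hfin => ?_) hgsm.aestronglyMeasurable).symm
      rw [hconv s hs A (F.le s A hA), hconv t (hs.trans hst) A (F.le s A hA),
        hkey s t hs hst htT A hA, hkey s s hs le_rfl (hst.trans htT) A hA]
    exact ⟨hνprob, withDensity_absolutelyContinuous μ w, hμν, hmem, hmart⟩
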